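/- arXiv:1909.10187 — 3 statements merged into one kernel-verified Lean document; each statement's English description precedes it below -/
import Mathlib

section
/- Let d and g be complex numbers with d ≠ 0 and g ≠ 0, let τ > 0 be real, and suppose g·e^{t·d} ≠ 1 for every t ∈ [0, τ]. Then the iterated integral ∫₀^τ ∫₀^t ((g·e^{s·d} − 1)/(g·e^{t·d} − 1))² · e^{d(t−s)} ds dt equals (2τ·d·g + g² − 1)/(d²·g·(g·e^{τd} − 1)) + (τ·d·g − g − 1)/(d²·g). -/
open Complex

noncomputable def Efun (d : ℂ) : ℝ → ℂ := fun t => Complex.exp ((t : ℂ) * d)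

lemma hE (d : ℂ) (s : ℝ) : HasDerivAt (Efun d) (d * Efun d s) s := by
  have h2 : HasDerivAt (fun x : ℝ => (x : ℂ) * d) d s := by
    simpa using (Complex.ofRealCLM.hasDerivAt (x := s)).mul_const d
  refine h2.cexp.congr_deriv ?_
  simp [Efun]; ring

lemma hEneg (d : ℂ) (s : ℝ) : Efun (-d) s = (Efun d s)⁻¹ := by
  simp only [Efun]
  rw [show ((s:ℂ) * -d) = -((s:ℂ)*d) by ring, Complex.exp_neg]

lemma hEcont (d : ℂ) : Continuous (Efun d) :=
  (Complex.continuous_ofReal.mul continuous_const).cexp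

lemma inner_eval (d g : ℂ) (hd : d ≠ 0) (t : ℝ) (hu : g * Efun d t - 1 ≠ 0) :
    (∫ s in (0:ℝ)..t,
        ((g * Complex.exp ((s : ℂ) * d) - 1) / (g * Complex.exp ((t : ℂ) * d) - 1)) ^ 2
          * Complex.exp (d * ((t : ℂ) - (s : ℂ))))
      = (g^2 * Efun d t * (Efun d t - 1) - 2*g*(t:ℂ)*d*Efun d t + Efun d t - 1)
          / (d * (g * Efun d t - 1)^2) := by
  have hexp : ∀ s : ℝ, Efun d s ≠ 0 := fun s => Complex.exp_ne_zero _
  have step1 : (∫ s in (0:ℝ)..t,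
        ((g * Complex.exp ((s : ℂ) * d) - 1) / (g * Complex.exp ((t : ℂ) * d) - 1)) ^ 2
          * Complex.exp (d * ((t : ℂ) - (s : ℂ))))
      = ((g * Efun d t - 1)^2)⁻¹ * ∫ s in (0:ℝ)..t,
          (g * Efun d s - 1)^2 * Complex.exp (d * ((t : ℂ) - (s : ℂ))) := by
    rw [← intervalIntegral.integral_const_mul]
    apply intervalIntegral.integral_congr
    intro s _
    simp only [Efun]
    rw [div_pow, div_mul_eq_mul_div, div_eq_inv_mul]
  rw [step1]
  set H : ℝ → ℂ := fun s => Efun d t * (g^2 * Efun d s / d - 2*g*(s:ℂ) - Efun (-d) s / d)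
    with hHdef
  have hH : ∀ s : ℝ,
      HasDerivAt H ((g * Efun d s - 1)^2 * Complex.exp (d * ((t : ℂ) - (s : ℂ)))) s := by
    intro s
    have h1 : HasDerivAt (fun x : ℝ => (x : ℂ)) 1 s := Complex.ofRealCLM.hasDerivAt
    have hA := ((hE d s).const_mul (g^2)).div_const d
    have hB : HasDerivAt (fun x : ℝ => 2*g*(x:ℂ)) (2*g) s := by simpa using h1.const_mul (2*g)
    have hC := (hE (-d) s).div_const d
    have hall := ((hA.sub hB).sub hC).const_mul (Efun d t)
    refine hall.congr_deriv ?_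
    have hts : Complex.exp (d * ((t : ℂ) - (s : ℂ))) = Efun d t * (Efun d s)⁻¹ := by
      simp only [Efun]
      rw [mul_sub, Complex.exp_sub, mul_comm d (t:ℂ), mul_comm d (s:ℂ)]
      ring
    rw [hts, hEneg]
    field_simp [hexp s]
    ring
  have hint : IntervalIntegrable
      (fun s : ℝ => (g * Efun d s - 1)^2 * Complex.exp (d * ((t : ℂ) - (s : ℂ))))
      MeasureTheory.volume 0 t := by
    apply Continuous.intervalIntegrable
    have hEc := hEcont d
    fun_prop
  rw [intervalIntegral.integral_eq_sub_of_hasDerivAt (fun s _ => hH s) hint]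
  have hden : d * (g * Efun d t - 1)^2 ≠ 0 := mul_ne_zero hd (pow_ne_zero _ hu)
  have hE0 : Efun d 0 = 1 := by simp [Efun]
  have hE0' : Efun (-d) 0 = 1 := by simp [Efun]
  rw [hHdef]
  simp only [hE0, hE0', hEneg, Complex.ofReal_zero]
  rw [inv_mul_eq_div, div_eq_div_iff (pow_ne_zero 2 hu) hden]
  field_simp [hexp t]
  ring

/-- Closed-form evaluation of the iterated integral `f̂₀(τ,k) = ∫₀^τ f̂₁(t,k) dt`
from Theorem 3.1: for complex `d ≠ 0`, `g ≠ 0`, real `τ > 0` with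
`g·e^{td} ≠ 1` for all `t ∈ [0, τ]`,
`∫₀^τ ∫₀^t ((g e^{sd} − 1)/(g e^{td} − 1))² e^{d(t−s)} ds dt
  = (2τdg + g² − 1)/(d²g(g e^{τd} − 1)) + (τdg − g − 1)/(d²g)`. -/
theorem f0_closed_form (d g : ℂ) (hd : d ≠ 0) (hg0 : g ≠ 0) (τ : ℝ) (hτ : 0 < τ)
    (hg : ∀ t ∈ Set.Icc (0:ℝ) τ, g * Complex.exp ((t : ℂ) * d) ≠ 1) :
    (∫ t in (0:ℝ)..τ, ∫ s in (0:ℝ)..t,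
        ((g * Complex.exp ((s : ℂ) * d) - 1) / (g * Complex.exp ((t : ℂ) * d) - 1)) ^ 2
          * Complex.exp (d * ((t : ℂ) - (s : ℂ))))
      = (2 * (τ : ℂ) * d * g + g ^ 2 - 1)
            / (d ^ 2 * g * (g * Complex.exp ((τ : ℂ) * d) - 1))
          + ((τ : ℂ) * d * g - g - 1) / (d ^ 2 * g) := by
  have hIcc : Set.uIcc (0:ℝ) τ = Set.Icc 0 τ := Set.uIcc_of_le hτ.le
  have hu : ∀ t ∈ Set.uIcc (0:ℝ) τ, g * Efun d t - 1 ≠ 0 := by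
    intro t ht
    exact sub_ne_zero.mpr (hg t (hIcc ▸ ht))
  set h : ℝ → ℂ := fun t =>
    (g^2 * Efun d t * (Efun d t - 1) - 2*g*(t:ℂ)*d*Efun d t + Efun d t - 1)
      / (d * (g * Efun d t - 1)^2) with hhdef
  have hcongr : (∫ t in (0:ℝ)..τ, ∫ s in (0:ℝ)..t,
        ((g * Complex.exp ((s : ℂ) * d) - 1) / (g * Complex.exp ((t : ℂ) * d) - 1)) ^ 2
          * Complex.exp (d * ((t : ℂ) - (s : ℂ))))
      = ∫ t in (0:ℝ)..τ, h t := by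
    apply intervalIntegral.integral_congr
    intro t ht
    exact inner_eval d g hd t (hu t ht)
  rw [hcongr]
  set G : ℝ → ℂ := fun t =>
    (2*(t:ℂ)*d*g + g^2 - 1) / (d^2*g*(g * Efun d t - 1)) + ((t:ℂ)*d*g - g - 1) / (d^2*g)
    with hGdef
  have hexp : ∀ s : ℝ, Efun d s ≠ 0 := fun s => Complex.exp_ne_zero _
  have hG : ∀ t ∈ Set.uIcc (0:ℝ) τ, HasDerivAt G (h t) t := by
    intro t ht
    have hut := hu t ht
    have h1 : HasDerivAt (fun x : ℝ => (x : ℂ)) 1 t := Complex.ofRealCLM.hasDerivAt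
    have hN : HasDerivAt (fun x : ℝ => 2*(x:ℂ)*d*g + g^2 - 1) (2*d*g) t := by
      simpa using ((h1.const_mul 2).mul_const d).mul_const g |>.add_const (g^2) |>.sub_const 1
    have hD := (((hE d t).const_mul g).sub_const 1).const_mul (d^2*g)
    have hD0 : d^2*g*(g * Efun d t - 1) ≠ 0 :=
      mul_ne_zero (mul_ne_zero (pow_ne_zero _ hd) hg0) hut
    have hfirst := hN.div hD hD0
    have hsecond := ((((h1.mul_const d).mul_const g).sub_const g).sub_const 1).div_const (d^2*g)
    have hall := hfirst.add hsecond
    refine hall.congr_deriv ?_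
    rw [hhdef]
    field_simp [hexp t, hut]
    ring
  have hint : IntervalIntegrable h MeasureTheory.volume 0 τ := by
    apply ContinuousOn.intervalIntegrable
    apply ContinuousOn.div
    · have hEc := hEcont d
      fun_prop
    · have hEc := hEcont d
      fun_prop
    · intro t ht
      exact mul_ne_zero hd (pow_ne_zero _ (hu t ht))
  rw [intervalIntegral.integral_eq_sub_of_hasDerivAt hG hint]
  have hE0 : Efun d 0 = 1 := by simp [Efun]
  have hg1 : g - 1 ≠ 0 := by
    have := hu 0 (Set.left_mem_uIcc)
    rwa [hE0, mul_one] at this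
  have huτ : g * Efun d τ - 1 ≠ 0 := hu τ Set.right_mem_uIcc
  rw [hGdef]
  simp only [hE0, Complex.ofReal_zero, Efun, zero_mul, Complex.exp_zero, mul_one]
  field_simp
  ring
end

section
/- Let κ > 0, τ₀ > 0, and θ, y, z be real numbers. For ε > 0 with κε ≠ 1 define a₁^ε = (ε/τ₀)(1 − e^{−τ₀/ε}), A = (1/(κτ₀))(1 − e^{−κτ₀}), a₂^ε = A + (A − a₁^ε)/(1 − κε), and set a₂* = 2A. Then the function ε ↦ [a₁^ε·y + a₂^ε·z + (2 − a₁^ε − a₂^ε)·θ] − [a₂*·z + (2 − a₂*)·θ] − [a₁^ε·(y − z) + (ε/τ₀)(1 − e^{−κτ₀})·(z − θ)] is O(ε²) as ε → 0⁺. -/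
open Real Filter Asymptotics

/-- The expansion `(VIX^ε)² − (VIX^*)² = a₁^ε(y − z) + (ε/τ₀)(1 − e^{−κτ₀})(z − θ) + O(ε²)`
as `ε → 0⁺`, where `a₁^ε = (ε/τ₀)(1 − e^{−τ₀/ε})`, `A = (1/(κτ₀))(1 − e^{−κτ₀})`,
`a₂^ε = A + (A − a₁^ε)/(1 − κε)`, and `a₂* = 2A`. -/
theorem vix_squared_expansion (κ τ₀ θ y z : ℝ) (hκ : 0 < κ) (hτ₀ : 0 < τ₀)
    (a₁ : ℝ → ℝ) (A : ℝ) (a₂ : ℝ → ℝ) (a₂star : ℝ)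
    (ha₁ : ∀ ε : ℝ, 0 < ε → a₁ ε = (ε / τ₀) * (1 - Real.exp (-τ₀ / ε)))
    (hA : A = (1 / (κ * τ₀)) * (1 - Real.exp (-κ * τ₀)))
    (ha₂ : ∀ ε : ℝ, 0 < ε → κ * ε ≠ 1 → a₂ ε = A + (A - a₁ ε) / (1 - κ * ε))
    (ha₂star : a₂star = 2 * A) :
    (fun ε : ℝ =>
        (a₁ ε * y + a₂ ε * z + (2 - a₁ ε - a₂ ε) * θ)
          - (a₂star * z + (2 - a₂star) * θ)
          - (a₁ ε * (y - z) + (ε / τ₀) * (1 - Real.exp (-κ * τ₀)) * (z - θ)))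
      =O[nhdsWithin 0 (Set.Ioi 0)] (fun ε : ℝ => ε ^ 2) := by

  rw [isBigO_iff]
  refine ⟨(|A| * κ + 1 / τ₀) * (2 * κ) * |z - θ|, ?_⟩
  filter_upwards [Ioo_mem_nhdsGT_of_mem
    (show (0:ℝ) ∈ Set.Ico 0 (1/(2*κ)) from ⟨le_refl 0, by positivity⟩)] with ε hε
  obtain ⟨hε0, hεb⟩ := hε
  have hκε : κ * ε < 1/2 := by
    have h := mul_lt_mul_of_pos_left hεb hκ
    rw [show κ * (1/(2*κ)) = 1/2 by field_simp] at h
    exact h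
  have hκε0 : 0 < κ * ε := mul_pos hκ hε0
  have h1 : (0:ℝ) < 1 - κ*ε := by linarith
  have hne : κ * ε ≠ 1 := by intro h; rw [h] at hκε; linarith
  have hτ : τ₀ ≠ 0 := ne_of_gt hτ₀
  have hexp : 1 - Real.exp (-κ * τ₀) = A * (κ * τ₀) := by
    rw [hA]; field_simp
  have key : (a₁ ε * y + a₂ ε * z + (2 - a₁ ε - a₂ ε) * θ)
          - (a₂star * z + (2 - a₂star) * θ)
          - (a₁ ε * (y - z) + (ε / τ₀) * (1 - Real.exp (-κ * τ₀)) * (z - θ))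
      = (A * κ * ε - a₁ ε) * (κ * ε) / (1 - κ * ε) * (z - θ) := by
    rw [ha₂ ε hε0 hne, ha₂star, hexp]
    field_simp
    ring
  rw [key]
  have ha1b : |a₁ ε| ≤ (1/τ₀) * ε := by
    rw [ha₁ ε hε0, abs_mul]
    have h2 : 0 < Real.exp (-τ₀/ε) := Real.exp_pos _
    have h3 : Real.exp (-τ₀/ε) ≤ 1 := by
      rw [Real.exp_le_one_iff]
      have : 0 < τ₀ / ε := div_pos hτ₀ hε0
      rw [neg_div]; linarith
    have h4 : |ε / τ₀| = ε / τ₀ := abs_of_pos (div_pos hε0 hτ₀)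
    have h5 : |1 - Real.exp (-τ₀/ε)| ≤ 1 := by rw [abs_le]; constructor <;> linarith
    calc |ε / τ₀| * |1 - Real.exp (-τ₀ / ε)| ≤ |ε / τ₀| * 1 := by
            exact mul_le_mul_of_nonneg_left h5 (abs_nonneg _)
      _ = (1/τ₀) * ε := by rw [h4]; ring
  have hA1 : |A * κ * ε - a₁ ε| ≤ (|A| * κ + 1/τ₀) * ε := by
    calc |A * κ * ε - a₁ ε| ≤ |A * κ * ε| + |a₁ ε| := abs_sub _ _
      _ ≤ |A| * κ * ε + (1/τ₀) * ε := by
          rw [abs_mul, abs_mul, abs_of_pos hκ, abs_of_pos hε0]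
          linarith
      _ = (|A| * κ + 1/τ₀) * ε := by ring
  rw [Real.norm_eq_abs, Real.norm_eq_abs, abs_mul, abs_div, abs_mul,
    abs_of_pos hκε0, abs_of_pos h1, abs_of_nonneg (sq_nonneg ε)]
  calc |A * κ * ε - a₁ ε| * (κ * ε) / (1 - κ * ε) * |z - θ|
      ≤ ((|A| * κ + 1/τ₀) * ε) * (κ * ε) / (1/2) * |z - θ| := by
        gcongr
        all_goals first | positivity | exact abs_nonneg _ | linarith | exact hA1
    _ = (|A| * κ + 1 / τ₀) * (2 * κ) * |z - θ| * ε ^ 2 := by ring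
end

section
/- Let κ > 0, τ₀ > 0, K > 0, and θ, u, v be real numbers. For ε > 0 with κε ≠ 1 define a₁^ε = (ε/τ₀)(1 − e^{−τ₀/ε}), A = (1/(κτ₀))(1 − e^{−κτ₀}), a₂^ε = A + (A − a₁^ε)/(1 − κε), a₂* = 2A, S(ε) = a₁^ε·u + a₂^ε·v + (2 − a₁^ε − a₂^ε)·θ, and S* = a₂*·v + (2 − a₂*)·θ. Assume S* > 0 and 100·√S* > K. Then the function ε ↦ max(100·√(S(ε)) − K, 0) − (100·√S* − K) − (100/(2·√S*))·[a₁^ε·(u − v) + (ε/τ₀)(1 − e^{−κτ₀})·(v − θ)] is O(ε²) as ε → 0⁺. -/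
open Real Filter Asymptotics

set_option maxHeartbeats 1000000 in
/-- The expansion of the in-the-money VIX call payoff:
`(100√(S(ε)) − K)⁺ = (100√S* − K) + (100/(2√S*))·[a₁^ε(u − v) + (ε/τ₀)(1 − e^{−κτ₀})(v − θ)] + O(ε²)`
as `ε → 0⁺`, where `S(ε) = a₁^ε u + a₂^ε v + (2 − a₁^ε − a₂^ε)θ`, `S* = a₂* v + (2 − a₂*)θ`,
assuming `S* > 0` and `100√S* > K`. -/
theorem vix_payoff_expansion (κ τ₀ K θ u v : ℝ) (hκ : 0 < κ) (hτ₀ : 0 < τ₀) (hK : 0 < K)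
    (a₁ : ℝ → ℝ) (A : ℝ) (a₂ : ℝ → ℝ) (a₂star : ℝ) (S : ℝ → ℝ) (Sstar : ℝ)
    (ha₁ : ∀ ε : ℝ, 0 < ε → a₁ ε = (ε / τ₀) * (1 - Real.exp (-τ₀ / ε)))
    (hA : A = (1 / (κ * τ₀)) * (1 - Real.exp (-κ * τ₀)))
    (ha₂ : ∀ ε : ℝ, 0 < ε → κ * ε ≠ 1 → a₂ ε = A + (A - a₁ ε) / (1 - κ * ε))
    (ha₂star : a₂star = 2 * A)
    (hS : ∀ ε : ℝ, S ε = a₁ ε * u + a₂ ε * v + (2 - a₁ ε - a₂ ε) * θ)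
    (hSstar : Sstar = a₂star * v + (2 - a₂star) * θ)
    (hSpos : 0 < Sstar) (hitm : K < 100 * Real.sqrt Sstar) :
    (fun ε : ℝ =>
        max (100 * Real.sqrt (S ε) - K) 0
          - (100 * Real.sqrt Sstar - K)
          - (100 / (2 * Real.sqrt Sstar))
              * (a₁ ε * (u - v) + (ε / τ₀) * (1 - Real.exp (-κ * τ₀)) * (v - θ)))
      =O[nhdsWithin 0 (Set.Ioi 0)] (fun ε : ℝ => ε ^ 2) := by
  rw [isBigO_iff]
  set t := Real.sqrt Sstar with htdef
  have ht0 : 0 < t := Real.sqrt_pos.mpr hSpos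
  have ht2 : t ^ 2 = Sstar := Real.sq_sqrt hSpos.le
  clear_value t
  have hA0 : 0 < A := by
    have h1 : Real.exp (-κ * τ₀) < 1 := by
      rw [Real.exp_lt_one_iff]; nlinarith
    rw [hA]
    apply mul_pos (by positivity) (by linarith)
  set C₁ : ℝ := |u - θ| / τ₀ + 2 * (κ * A + 1 / τ₀) * |v - θ| + 1 with hC₁def
  clear_value C₁
  have hC₁pos : 0 < C₁ := by rw [hC₁def]; positivity
  set C₂ : ℝ := |v - θ| * κ * 2 * (κ * A + 1 / τ₀) with hC₂def
  clear_value C₂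
  have hC₂nn : 0 ≤ C₂ := by rw [hC₂def]; positivity
  set δ : ℝ := min (1 / (2 * κ)) (min (Sstar / (2 * C₁)) (t * (100 * t - K) / (200 * C₁)))
    with hδdef
  clear_value δ
  have hitm' : 0 < 100 * t - K := by linarith
  have hδpos : 0 < δ := by
    rw [hδdef]
    apply lt_min (by positivity) (lt_min (by positivity) (by positivity))
  refine ⟨50 / t * (C₁ ^ 2 / Sstar + C₂), ?_⟩
  filter_upwards [Ioo_mem_nhdsGT_of_mem (Set.left_mem_Ico.mpr hδpos)] with ε hε
  obtain ⟨hε0, hεδ⟩ := hε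
  rw [hδdef] at hεδ
  have hεδ1 : ε < 1 / (2 * κ) := lt_of_lt_of_le hεδ (min_le_left _ _)
  have hεδ2 : ε < Sstar / (2 * C₁) := lt_of_lt_of_le hεδ ((min_le_right _ _).trans (min_le_left _ _))
  have hεδ3 : ε < t * (100 * t - K) / (200 * C₁) :=
    lt_of_lt_of_le hεδ ((min_le_right _ _).trans (min_le_right _ _))
  have hκε : κ * ε < 1 / 2 := by
    have h1 : ε * (2 * κ) < 1 := (lt_div_iff₀ (by positivity)).mp hεδ1
    nlinarith
  have hκε1 : κ * ε ≠ 1 := by linarith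
  have h1m : (1 : ℝ) / 2 ≤ 1 - κ * ε := by linarith
  have h1m0 : (0 : ℝ) < 1 - κ * ε := by linarith
  -- a₁ bounds
  have ha1ε := ha₁ ε hε0
  have hexp1 : Real.exp (-τ₀ / ε) ≤ 1 := by
    apply Real.exp_le_one_iff.mpr
    apply div_nonpos_of_nonpos_of_nonneg <;> linarith
  have hexp0 : 0 < Real.exp (-τ₀ / ε) := Real.exp_pos _
  have ha1nn : 0 ≤ a₁ ε := by
    rw [ha1ε]
    apply mul_nonneg (by positivity) (by linarith)
  have ha1le : a₁ ε ≤ ε / τ₀ := by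
    rw [ha1ε]
    have h1 : 1 - Real.exp (-τ₀ / ε) ≤ 1 := by linarith
    nlinarith [div_pos hε0 hτ₀]
  -- B
  set B : ℝ := κ * ε * A - a₁ ε with hBdef
  clear_value B
  have hBabs : |B| ≤ ε * (κ * A + 1 / τ₀) := by
    rw [abs_le]
    constructor
    · have h1 : 0 ≤ κ * ε * A := by positivity
      have h3 : ε * (κ * A + 1 / τ₀) = κ * ε * A + ε / τ₀ := by ring
      linarith
    · have h1 : 0 ≤ a₁ ε := ha1nn
      have h2 : 0 < ε / τ₀ := div_pos hε0 hτ₀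
      have h3 : ε * (κ * A + 1 / τ₀) = κ * ε * A + ε / τ₀ := by ring
      linarith
  -- D
  have ha2ε := ha₂ ε hε0 hκε1
  set D : ℝ := S ε - Sstar with hDdef
  clear_value D
  have ha2diff : a₂ ε - 2 * A = B / (1 - κ * ε) := by
    rw [ha2ε, hBdef]
    field_simp
    ring
  have hDeq : D = a₁ ε * (u - θ) + B / (1 - κ * ε) * (v - θ) := by
    have h1 : S ε - Sstar = a₁ ε * (u - θ) + (a₂ ε - 2 * A) * (v - θ) := by
      rw [hS, hSstar, ha₂star]; ring
    rw [hDdef, h1, ha2diff]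
  have habsB2 : |B / (1 - κ * ε)| ≤ 2 * (ε * (κ * A + 1 / τ₀)) := by
    rw [abs_div, abs_of_pos h1m0, div_le_iff₀ h1m0]
    nlinarith [abs_nonneg B, mul_nonneg hε0.le (by positivity : (0:ℝ) ≤ κ * A + 1 / τ₀)]
  have hDabs : |D| ≤ C₁ * ε := by
    calc |D| ≤ |a₁ ε * (u - θ)| + |B / (1 - κ * ε) * (v - θ)| := by
          rw [hDeq]; exact abs_add_le _ _
      _ ≤ ε / τ₀ * |u - θ| + 2 * (ε * (κ * A + 1 / τ₀)) * |v - θ| := by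
          rw [abs_mul, abs_mul, abs_of_nonneg ha1nn]
          gcongr
      _ ≤ C₁ * ε := by
          rw [hC₁def]
          have e : (|u - θ| / τ₀ + 2 * (κ * A + 1 / τ₀) * |v - θ| + 1) * ε
              = ε / τ₀ * |u - θ| + 2 * (ε * (κ * A + 1 / τ₀)) * |v - θ| + ε := by ring
          rw [e]
          linarith
  -- L and R
  set L : ℝ := a₁ ε * (u - v) + (ε / τ₀) * (1 - Real.exp (-κ * τ₀)) * (v - θ) with hLdef
  clear_value L
  have hκεA : κ * ε * A = (ε / τ₀) * (1 - Real.exp (-κ * τ₀)) := by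
    rw [hA]; field_simp
  have hLeq : L = a₁ ε * (u - v) + κ * ε * A * (v - θ) := by
    rw [hLdef, hκεA]
  set R : ℝ := D - L with hRdef
  clear_value R
  have hReq : R = (v - θ) * (κ * ε) * (B / (1 - κ * ε)) := by
    have ha1B : a₁ ε = κ * ε * A - B := by rw [hBdef]; ring
    rw [hRdef, hDeq, hLeq, ha1B]
    field_simp
    ring
  have hRabs : |R| ≤ C₂ * ε ^ 2 := by
    rw [hReq, hC₂def, abs_mul, abs_mul, abs_of_nonneg (by positivity : (0:ℝ) ≤ κ * ε)]
    calc |v - θ| * (κ * ε) * |B / (1 - κ * ε)|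
        ≤ |v - θ| * (κ * ε) * (2 * (ε * (κ * A + 1 / τ₀))) := by
          gcongr
      _ = |v - θ| * κ * 2 * (κ * A + 1 / τ₀) * ε ^ 2 := by ring
  -- S ε bounds
  have hDsmall : |D| ≤ Sstar / 2 := by
    have h1 : ε * (2 * C₁) < Sstar := (lt_div_iff₀ (by positivity)).mp hεδ2
    have h2 : C₁ * ε ≤ Sstar / 2 := by linarith
    linarith
  have hSε0 : 0 ≤ S ε := by
    have h1 := (abs_le.mp hDsmall).1
    have h2 : S ε - Sstar = D := hDdef.symm
    linarith
  set s := Real.sqrt (S ε) with hsdef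
  clear_value s
  have hs0 : 0 ≤ s := by rw [hsdef]; exact Real.sqrt_nonneg _
  have hs2 : s ^ 2 = S ε := by rw [hsdef]; exact Real.sq_sqrt hSε0
  have hst : |s - t| * t ≤ |D| := by
    have h1 : |s - t| * (s + t) = |D| := by
      rw [← abs_of_nonneg (by positivity : (0:ℝ) ≤ s + t), ← abs_mul]
      congr 1
      rw [hDdef]
      linear_combination hs2 - ht2
    linarith [mul_nonneg (abs_nonneg (s - t)) hs0]
  have hstC : |s - t| * t ≤ C₁ * ε := le_trans hst hDabs
  -- ITM
  have hstsmall : |s - t| < (100 * t - K) / 200 := by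
    have h1 : ε * (200 * C₁) < t * (100 * t - K) := (lt_div_iff₀ (by positivity)).mp hεδ3
    have h2 : |s - t| * t < (100 * t - K) / 200 * t := by
      have e : (100 * t - K) / 200 * t = (100 * (t * t) - K * t) / 200 := by ring
      have e2 : ε * (200 * C₁) = 200 * (C₁ * ε) := by ring
      rw [e]
      rw [e2] at h1
      linarith
    exact lt_of_mul_lt_mul_right h2 ht0.le
  have hITM : 0 < 100 * s - K := by
    have h1 := neg_abs_le (s - t)
    linarith
  have hmax : max (100 * s - K) 0 = 100 * s - K := max_eq_left hITM.le
  -- final identity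
  have hkey : max (100 * s - K) 0 - (100 * t - K) - (100 / (2 * t)) * L
      = -50 * (s - t) ^ 2 / t + 50 * R / t := by
    rw [hmax]
    have hDst : D = s ^ 2 - t ^ 2 := by rw [hs2, ht2, hDdef]
    have hLDR : L = D - R := by rw [hRdef]; ring
    rw [hLDR, hDst]
    field_simp
    ring
  rw [Real.norm_eq_abs, Real.norm_eq_abs]
  calc |max (100 * s - K) 0 - (100 * t - K) - 100 / (2 * t) * L|
      = |(-50) * (s - t) ^ 2 / t + 50 * R / t| := by rw [← hkey]
    _ ≤ |(-50) * (s - t) ^ 2 / t| + |50 * R / t| := abs_add_le _ _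
    _ = 50 * (s - t) ^ 2 / t + 50 * |R| / t := by
        rw [abs_div, abs_div, abs_mul, abs_mul, abs_of_pos ht0]
        norm_num
    _ ≤ 50 / t * (C₁ ^ 2 / Sstar + C₂) * |ε ^ 2| := by
        have hε2 : |ε ^ 2| = ε ^ 2 := abs_of_nonneg (by positivity)
        rw [hε2]
        have h1 : (s - t) ^ 2 ≤ (C₁ * ε) ^ 2 / Sstar := by
          have hnn : 0 ≤ |s - t| * t := mul_nonneg (abs_nonneg _) ht0.le
          have h2 : ((s - t) * t) ^ 2 ≤ (C₁ * ε) ^ 2 := by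
            calc ((s - t) * t) ^ 2 = (|s - t| * t) ^ 2 := by
                  rw [mul_pow, mul_pow, sq_abs]
              _ ≤ (C₁ * ε) ^ 2 := pow_le_pow_left₀ hnn hstC 2
          rw [le_div_iff₀ hSpos, ← ht2]
          calc (s - t) ^ 2 * t ^ 2 = ((s - t) * t) ^ 2 := by ring
            _ ≤ (C₁ * ε) ^ 2 := h2
        have h3 : 50 * (s - t) ^ 2 / t ≤ 50 * ((C₁ * ε) ^ 2 / Sstar) / t := by gcongr
        have h4 : 50 * |R| / t ≤ 50 * (C₂ * ε ^ 2) / t := by gcongr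
        have e3 : 50 * ((C₁ * ε) ^ 2 / Sstar) / t = 50 / t * (C₁ ^ 2 / Sstar) * ε ^ 2 := by ring
        have e4 : 50 * (C₂ * ε ^ 2) / t = 50 / t * C₂ * ε ^ 2 := by ring
        calc 50 * (s - t) ^ 2 / t + 50 * |R| / t
            ≤ 50 / t * (C₁ ^ 2 / Sstar) * ε ^ 2 + 50 / t * C₂ * ε ^ 2 := by
              rw [← e3, ← e4]; linarith
          _ = 50 / t * (C₁ ^ 2 / Sstar + C₂) * ε ^ 2 := by ring
end
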